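/- Local average potential outcomes under one-sided noncompliance, part I: under Assumptions 1, 2 and 4, E[Y(0,0)] = E[Y | Z_i=0, Z_j=0]; E[Y(1,0) · 1_{C_i}] = E[Y · D_i | Z_i=1, Z_j=0]; and E[Y(0,1) · 1_{C_j}] = E[Y · D_j | Z_i=0, Z_j=1], where 1_A denotes the indicator of the event A (so, e.g., E[Y(1,0) · 1_{C_i}] = E[Y(1,0)|C_i] · P[C_i]). -/

import Mathlib

open MeasureTheory ProbabilityTheory
noncomputable def bInd (b : Bool) : ℝ := if b then 1 else 0
lemma meas_apply2 {α : Type*} [MeasurableSpace α] {g : α → Bool → Bool → ℝ} {b c : α → Bool}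
    (hg : Measurable (fun v => g v)) (hb : Measurable b) (hc : Measurable c) :
    Measurable (fun v => g v (b v) (c v)) := by
  have h : (fun v => g v (b v) (c v)) = fun v =>
      if b v then (if c v then g v true true else g v true false)
      else (if c v then g v false true else g v false false) := by
    funext v; cases hbv : b v <;> cases hcv : c v <;> simp
  rw [h]
  have hgm : ∀ d d' : Bool, Measurable (fun v => g v d d') := fun d d' =>
    (measurable_pi_apply d').comp ((measurable_pi_apply d).comp hg)
  have hbs : MeasurableSet {v | b v = true} := hb (MeasurableSet.singleton true)
  have hcs : MeasurableSet {v | c v = true} := hc (MeasurableSet.singleton true)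
  exact Measurable.ite hbs (Measurable.ite hcs (hgm _ _) (hgm _ _))
    (Measurable.ite hcs (hgm _ _) (hgm _ _))

lemma cond_integral_of_indep {Ω α β : Type*} [MeasurableSpace Ω] [MeasurableSpace α]
    [MeasurableSpace β] (P : Measure Ω) [IsProbabilityMeasure P] {V : Ω → α} {W : Ω → β}
    (hV : Measurable V) (hW : Measurable W) (hInd : IndepFun V W P)
    {φ : α → ℝ} (hφ : Measurable φ) {s : Set β} (hs : MeasurableSet s)
    (hpos : 0 < P (W ⁻¹' s)) :
    ∫ ω, φ (V ω) ∂(P[|W ⁻¹' s]) = ∫ ω, φ (V ω) ∂P := by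
  set A := W ⁻¹' s with hAdef
  have hA : MeasurableSet A := hW hs
  have hψ : Measurable (Set.indicator s (fun _ => (1:ℝ))) :=
    (measurable_const.indicator hs)
  have hindep : IndepFun (fun ω => φ (V ω)) (fun ω => Set.indicator s (fun _ => (1:ℝ)) (W ω)) P :=
    hInd.comp hφ hψ
  have hmul : ∫ ω, φ (V ω) * Set.indicator s (fun _ => (1:ℝ)) (W ω) ∂P
      = (∫ ω, φ (V ω) ∂P) * ∫ ω, Set.indicator s (fun _ => (1:ℝ)) (W ω) ∂P :=
    hindep.integral_mul_eq_mul_integral (hφ.comp hV).aestronglyMeasurable (hψ.comp hW).aestronglyMeasurable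
  have hind_eq : (fun ω => Set.indicator s (fun _ => (1:ℝ)) (W ω))
      = Set.indicator A (fun _ => (1:ℝ)) := by
    funext ω
    by_cases h : W ω ∈ s <;> simp [Set.indicator, h, hAdef, Set.mem_preimage]
  have hindint : ∫ ω, Set.indicator s (fun _ => (1:ℝ)) (W ω) ∂P = (P A).toReal := by
    rw [hind_eq, integral_indicator_const (1:ℝ) hA]; simp; rfl
  have htop : P A ≠ ⊤ := (measure_lt_top P A).ne
  have htr : (P A).toReal ≠ 0 := by
    simp [ENNReal.toReal_ne_zero, hpos.ne', htop]
  rw [ProbabilityTheory.cond, integral_smul_measure, ← integral_indicator hA]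
  have : (Set.indicator A fun ω => φ (V ω)) =
      fun ω => φ (V ω) * Set.indicator s (fun _ => (1:ℝ)) (W ω) := by
    funext ω
    by_cases h : W ω ∈ s <;>
      simp [Set.indicator, h, hAdef, Set.mem_preimage]
  rw [this, hmul, hindint]
  simp [ENNReal.toReal_inv, smul_eq_mul]
  field_simp

lemma ae_cond_mem' {Ω : Type*} [MeasurableSpace Ω] {P : Measure Ω} {A : Set Ω}
    (hA : MeasurableSet A) : ∀ᵐ ω ∂(P[|A]), ω ∈ A := by
  rw [Filter.eventually_iff, mem_ae_iff]
  have h : {ω | ω ∈ A}ᶜ = Aᶜ := rfl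
  rw [h, ProbabilityTheory.cond_apply hA]
  simp
theorem stmt_6
    {Ω : Type*} [MeasurableSpace Ω] (P : Measure Ω) [IsProbabilityMeasure P]
    (Y : Bool → Bool → Ω → ℝ) (Di Dj : Bool → Bool → Ω → Bool)
    (Zi Zj : Ω → Bool)
    (hYmeas : ∀ d d', Measurable (Y d d'))
    (hYint : ∀ d d', Integrable (Y d d') P)
    (hDimeas : ∀ z z', Measurable (Di z z'))
    (hDjmeas : ∀ z z', Measurable (Dj z z'))
    (hZi : Measurable Zi) (hZj : Measurable Zj)
    (hpos : ∀ z z', 0 < P ({x | Zi x = z} ∩ {x | Zj x = z'}))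
    (hIV : IndepFun
      (fun ω => ((fun d d' => Y d d' ω),
                 (fun z z' => Di z z' ω),
                 (fun z z' => Dj z z' ω)))
      (fun ω => (Zi ω, Zj ω)) P)
    (hmono : ∀ᵐ ω ∂P,
      (Di false false ω ≤ Di false true ω ∧ Di false true ω ≤ Di true false ω ∧
        Di true false ω ≤ Di true true ω) ∧
      (Dj false false ω ≤ Dj false true ω ∧ Dj false true ω ≤ Dj true false ω ∧
        Dj true false ω ≤ Dj true true ω))
    (hosn : ∀ᵐ ω ∂P,
      Di false false ω = false ∧ Di false true ω = false ∧
      Dj false false ω = false ∧ Dj false true ω = false)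
    :
    (∫ ω, Y false false ω ∂P) = (∫ ω, (Y (Di (Zi ω) (Zj ω) ω) (Dj (Zj ω) (Zi ω) ω) ω) ∂(P[|({x | Zi x = false} ∩ {x | Zj x = false})]))
    ∧ (∫ ω, Y true false ω * Set.indicator ({x | Di true false x = true ∧ Di false true x = false}) (fun _ => (1:ℝ)) ω ∂P) = (∫ ω, (Y (Di (Zi ω) (Zj ω) ω) (Dj (Zj ω) (Zi ω) ω) ω) * bInd (Di (Zi ω) (Zj ω) ω) ∂(P[|({x | Zi x = true} ∩ {x | Zj x = false})]))
    ∧ (∫ ω, Y false true ω * Set.indicator ({x | Dj true false x = true ∧ Dj false true x = false}) (fun _ => (1:ℝ)) ω ∂P) = (∫ ω, (Y (Di (Zi ω) (Zj ω) ω) (Dj (Zj ω) (Zi ω) ω) ω) * bInd (Dj (Zj ω) (Zi ω) ω) ∂(P[|({x | Zi x = false} ∩ {x | Zj x = true})])) := by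

  classical
  set V : Ω → (Bool → Bool → ℝ) × (Bool → Bool → Bool) × (Bool → Bool → Bool) :=
    fun ω => ((fun d d' => Y d d' ω), (fun z z' => Di z z' ω), (fun z z' => Dj z z' ω)) with hVdef
  set W : Ω → Bool × Bool := fun ω => (Zi ω, Zj ω) with hWdef
  have hV : Measurable V := by
    refine Measurable.prod ?_ (Measurable.prod ?_ ?_) <;>
      exact measurable_pi_lambda _ (fun a => measurable_pi_lambda _ (fun b => by
        first | exact hYmeas a b | exact hDimeas a b | exact hDjmeas a b))
  have hW : Measurable W := hZi.prod hZj
  have hsetEq : ∀ z z' : Bool, ({x | Zi x = z} ∩ {x | Zj x = z'}) = W ⁻¹' {(z, z')} := by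
    intro z z'; ext ω
    simp [hWdef, Set.mem_preimage, Prod.ext_iff, Set.mem_inter_iff]
  have hsingle : ∀ z z' : Bool, MeasurableSet ({(z, z')} : Set (Bool × Bool)) :=
    fun z z' => MeasurableSet.singleton _
  have hpos' : ∀ z z' : Bool, 0 < P (W ⁻¹' {(z, z')}) := by
    intro z z'; rw [← hsetEq]; exact hpos z z'
  have hmem : ∀ z z' : Bool, ∀ᵐ ω ∂(P[|W ⁻¹' {(z, z')}]), Zi ω = z ∧ Zj ω = z' := by
    intro z z'
    filter_upwards [ae_cond_mem' (hW (hsingle z z'))] with ω hω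
    simpa [hWdef, Prod.ext_iff] using hω
  have hbmeas : Measurable bInd := measurable_of_countable _
  -- measurability of the three φ's
  have hφ1 : Measurable (fun v : (Bool → Bool → ℝ) × (Bool → Bool → Bool) × (Bool → Bool → Bool) =>
      v.1 (v.2.1 false false) (v.2.2 false false)) :=
    meas_apply2 measurable_fst
      ((measurable_pi_apply false).comp ((measurable_pi_apply false).comp
        (measurable_fst.comp measurable_snd)))
      ((measurable_pi_apply false).comp ((measurable_pi_apply false).comp
        (measurable_snd.comp measurable_snd)))
  have hφ2 : Measurable (fun v : (Bool → Bool → ℝ) × (Bool → Bool → Bool) × (Bool → Bool → Bool) =>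
      v.1 (v.2.1 true false) (v.2.2 false true) * bInd (v.2.1 true false)) := by
    refine Measurable.mul ?_ ?_
    · exact meas_apply2 measurable_fst
        ((measurable_pi_apply false).comp ((measurable_pi_apply true).comp
          (measurable_fst.comp measurable_snd)))
        ((measurable_pi_apply true).comp ((measurable_pi_apply false).comp
          (measurable_snd.comp measurable_snd)))
    · exact hbmeas.comp ((measurable_pi_apply false).comp ((measurable_pi_apply true).comp
        (measurable_fst.comp measurable_snd)))
  have hφ3 : Measurable (fun v : (Bool → Bool → ℝ) × (Bool → Bool → Bool) × (Bool → Bool → Bool) =>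
      v.1 (v.2.1 false true) (v.2.2 true false) * bInd (v.2.2 true false)) := by
    refine Measurable.mul ?_ ?_
    · exact meas_apply2 measurable_fst
        ((measurable_pi_apply true).comp ((measurable_pi_apply false).comp
          (measurable_fst.comp measurable_snd)))
        ((measurable_pi_apply false).comp ((measurable_pi_apply true).comp
          (measurable_snd.comp measurable_snd)))
    · exact hbmeas.comp ((measurable_pi_apply false).comp ((measurable_pi_apply true).comp
        (measurable_snd.comp measurable_snd)))
  refine ⟨?_, ?_, ?_⟩
  · -- part 1
    rw [hsetEq false false]
    have h1 : ∫ ω, (Y (Di (Zi ω) (Zj ω) ω) (Dj (Zj ω) (Zi ω) ω) ω) ∂(P[|W ⁻¹' {(false, false)}])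
        = ∫ ω, (fun v : (Bool → Bool → ℝ) × (Bool → Bool → Bool) × (Bool → Bool → Bool) =>
            v.1 (v.2.1 false false) (v.2.2 false false)) (V ω) ∂(P[|W ⁻¹' {(false, false)}]) := by
      refine integral_congr_ae ?_
      filter_upwards [hmem false false] with ω hω
      rw [hω.1, hω.2]
    rw [h1, cond_integral_of_indep P hV hW hIV hφ1 (hsingle false false) (hpos' false false)]
    refine integral_congr_ae ?_
    filter_upwards [hosn] with ω hω
    simp only [hVdef]
    rw [hω.1, hω.2.2.1]
  · -- part 2
    rw [hsetEq true false]
    have h1 : ∫ ω, (Y (Di (Zi ω) (Zj ω) ω) (Dj (Zj ω) (Zi ω) ω) ω) * bInd (Di (Zi ω) (Zj ω) ω)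
          ∂(P[|W ⁻¹' {(true, false)}])
        = ∫ ω, (fun v : (Bool → Bool → ℝ) × (Bool → Bool → Bool) × (Bool → Bool → Bool) =>
            v.1 (v.2.1 true false) (v.2.2 false true) * bInd (v.2.1 true false)) (V ω)
          ∂(P[|W ⁻¹' {(true, false)}]) := by
      refine integral_congr_ae ?_
      filter_upwards [hmem true false] with ω hω
      rw [hω.1, hω.2]
    rw [h1, cond_integral_of_indep P hV hW hIV hφ2 (hsingle true false) (hpos' true false)]
    refine integral_congr_ae ?_
    filter_upwards [hosn] with ω hω
    simp only [hVdef]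
    rw [hω.2.2.2]
    rcases hDi : Di true false ω with _ | _
    · simp [bInd, Set.indicator, hDi]
    · simp [bInd, Set.indicator, hDi, hω.2.1]
  · -- part 3
    rw [hsetEq false true]
    have h1 : ∫ ω, (Y (Di (Zi ω) (Zj ω) ω) (Dj (Zj ω) (Zi ω) ω) ω) * bInd (Dj (Zj ω) (Zi ω) ω)
          ∂(P[|W ⁻¹' {(false, true)}])
        = ∫ ω, (fun v : (Bool → Bool → ℝ) × (Bool → Bool → Bool) × (Bool → Bool → Bool) =>
            v.1 (v.2.1 false true) (v.2.2 true false) * bInd (v.2.2 true false)) (V ω)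
          ∂(P[|W ⁻¹' {(false, true)}]) := by
      refine integral_congr_ae ?_
      filter_upwards [hmem false true] with ω hω
      rw [hω.1, hω.2]
    rw [h1, cond_integral_of_indep P hV hW hIV hφ3 (hsingle false true) (hpos' false true)]
    refine integral_congr_ae ?_
    filter_upwards [hosn] with ω hω
    simp only [hVdef]
    rw [hω.2.1]
    rcases hDj : Dj true false ω with _ | _
    · simp [bInd, Set.indicator, hDj]
    · simp [bInd, Set.indicator, hDj, hω.2.2.2]
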